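/- Fix positive integers t, n, B and positive integers a_1, …, a_n with Σ_{i∈[n]} a_i = tB, and let G be the bin-packing reduction graph for these data. If there is a partition S_1, …, S_t of [n] such that Σ_{i∈S_j} a_i = B for every j ∈ [t], then there is a partition V_1, …, V_t of V(G) such that for every j ∈ [t] the induced subgraph G[V_j] is connected and |V_j| = 3B. -/
import Mathlib


/-- Vertex type of the bin-packing reduction graph: the vertices `u i`, the vertices
`w j`, the `a i - 1` pendant vertices attached to `u i`, and the `2B - 1` pendant
vertices attached to `w j`. -/
inductive BPV (t n B : ℕ) (a : Fin n → ℕ) : Type where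
  | u (i : Fin n)
  | w (j : Fin t)
  | p (i : Fin n) (x : Fin (a i - 1))
  | q (j : Fin t) (y : Fin (2 * B - 1))
  deriving DecidableEq, Fintype

/-- Base relation defining the edges of the bin-packing reduction graph:
every `u i` is adjacent to every `w j`, each pendant `p i x` is adjacent only to
`u i`, and each pendant `q j y` is adjacent only to `w j`. -/
def bpRel (t n B : ℕ) (a : Fin n → ℕ) : BPV t n B a → BPV t n B a → Prop
  | .u _, .w _ => True
  | .p i _, .u i' => i = i'
  | .q j _, .w j' => j = j'
  | _, _ => False

/-- The bin-packing reduction graph. -/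
def bpGraph (t n B : ℕ) (a : Fin n → ℕ) : SimpleGraph (BPV t n B a) :=
  SimpleGraph.fromRel (bpRel t n B a)

/-- Assignment of every vertex to a bin, given an assignment `f` of the items. -/
def bpAssign (t n B : ℕ) (a : Fin n → ℕ) (f : Fin n → Fin t) : BPV t n B a → Fin t
  | .u i => f i
  | .w j => j
  | .p i _ => f i
  | .q j _ => j

@[simp] lemma bpAssign_u (t n B : ℕ) (a : Fin n → ℕ) (f : Fin n → Fin t) (i : Fin n) :
    bpAssign t n B a f (.u i) = f i := rfl
@[simp] lemma bpAssign_w (t n B : ℕ) (a : Fin n → ℕ) (f : Fin n → Fin t) (j : Fin t) :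
    bpAssign t n B a f (.w j) = j := rfl
@[simp] lemma bpAssign_p (t n B : ℕ) (a : Fin n → ℕ) (f : Fin n → Fin t) (i : Fin n)
    (x : Fin (a i - 1)) : bpAssign t n B a f (.p i x) = f i := rfl
@[simp] lemma bpAssign_q (t n B : ℕ) (a : Fin n → ℕ) (f : Fin n → Fin t) (j : Fin t)
    (y : Fin (2 * B - 1)) : bpAssign t n B a f (.q j y) = j := rfl

lemma bp_adj_uw (t n B : ℕ) (a : Fin n → ℕ) (i : Fin n) (j : Fin t) :
    (bpGraph t n B a).Adj (.u i) (.w j) := by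
  rw [bpGraph, SimpleGraph.fromRel_adj]
  exact ⟨(nofun), Or.inl trivial⟩

lemma bp_adj_pu (t n B : ℕ) (a : Fin n → ℕ) (i : Fin n) (x : Fin (a i - 1)) :
    (bpGraph t n B a).Adj (.p i x) (.u i) := by
  rw [bpGraph, SimpleGraph.fromRel_adj]
  exact ⟨(nofun), Or.inl rfl⟩

lemma bp_adj_qw (t n B : ℕ) (a : Fin n → ℕ) (j : Fin t) (y : Fin (2 * B - 1)) :
    (bpGraph t n B a).Adj (.q j y) (.w j) := by
  rw [bpGraph, SimpleGraph.fromRel_adj]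
  exact ⟨(nofun), Or.inl rfl⟩

theorem stmt_8 (t n B : ℕ) (ht : 0 < t) (hn : 0 < n) (hB : 0 < B)
    (a : Fin n → ℕ) (ha : ∀ i, 0 < a i) (hsum : ∑ i, a i = t * B)
    (Spart : Fin t → Finset (Fin n))
    (hpart : ∀ i : Fin n, ∃! j : Fin t, i ∈ Spart j)
    (hbal : ∀ j : Fin t, ∑ i ∈ Spart j, a i = B) :
    ∃ Vpart : Fin t → Finset (BPV t n B a),
      (∀ x : BPV t n B a, ∃! j : Fin t, x ∈ Vpart j) ∧
      ∀ j : Fin t,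
        ((bpGraph t n B a).induce (Vpart j : Set (BPV t n B a))).Connected ∧
        (Vpart j).card = 3 * B := by
  classical
  choose f hf hu using hpart
  let g : BPV t n B a → Fin t := bpAssign t n B a f
  refine ⟨fun j => Finset.univ.filter (fun x => g x = j), ?_, ?_⟩
  · intro x
    refine ⟨g x, by simp [g], fun j' hj => ?_⟩
    simp only [Finset.mem_filter, Finset.mem_univ, true_and] at hj
    exact hj.symm
  · intro j
    set V : Finset (BPV t n B a) := Finset.univ.filter (fun x => g x = j) with hV
    have hmem : ∀ x, x ∈ V ↔ bpAssign t n B a f x = j := by intro x; simp [hV, g]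
    -- membership facts
    have hw : (BPV.w j : BPV t n B a) ∈ V := by simp [hmem]
    constructor
    · -- connectivity
      rw [SimpleGraph.connected_iff]
      refine ⟨?_, ⟨⟨BPV.w j, hw⟩⟩⟩
      have reach : ∀ v : (V : Set (BPV t n B a)),
          ((bpGraph t n B a).induce (V : Set (BPV t n B a))).Reachable ⟨BPV.w j, hw⟩ v := by
        rintro ⟨v, hv⟩
        match v with
        | .w j' =>
          have : j' = j := by simpa [hmem] using hv
          subst this
          exact SimpleGraph.Reachable.refl _
        | .u i =>
          have hadj : ((bpGraph t n B a).induce (V : Set (BPV t n B a))).Adj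
              ⟨BPV.u i, hv⟩ ⟨BPV.w j, hw⟩ := bp_adj_uw t n B a i j
          exact hadj.reachable.symm
        | .p i x =>
          have hij : f i = j := by simpa [hmem] using hv
          have hui : (BPV.u i : BPV t n B a) ∈ V := by simp [hmem, hij]
          have hui' : (BPV.u i : BPV t n B a) ∈ (V : Set (BPV t n B a)) := hui
          have hadj1 : ((bpGraph t n B a).induce (V : Set (BPV t n B a))).Adj
              ⟨BPV.u i, hui'⟩ ⟨BPV.w j, hw⟩ := bp_adj_uw t n B a i j
          have hadj2 : ((bpGraph t n B a).induce (V : Set (BPV t n B a))).Adj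
              ⟨BPV.p i x, hv⟩ ⟨BPV.u i, hui'⟩ := bp_adj_pu t n B a i x
          exact (hadj1.reachable.symm.trans hadj2.reachable.symm : _)
        | .q j' y =>
          have : j' = j := by simpa [hmem] using hv
          subst this
          have hadj : ((bpGraph t n B a).induce (V : Set (BPV t n B a))).Adj
              ⟨BPV.q j' y, hv⟩ ⟨BPV.w j', hw⟩ := bp_adj_qw t n B a j' y
          exact hadj.reachable.symm
      exact fun x y => (reach x).symm.trans (reach y)
    · -- cardinality
      have hfmem : ∀ i : Fin n, f i = j ↔ i ∈ Spart j := by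
        intro i
        constructor
        · rintro rfl; exact hf i
        · intro h; exact (hu i j h).symm
      have hVeq : V = ({BPV.w j} : Finset (BPV t n B a))
          ∪ Finset.univ.image (fun y : Fin (2 * B - 1) => BPV.q j y)
          ∪ (Spart j).image BPV.u
          ∪ ((Spart j).sigma (fun i => (Finset.univ : Finset (Fin (a i - 1))))).image
              (fun p => BPV.p p.1 p.2) := by
        ext x
        match x with
        | .w j' => simp [hmem, eq_comm]
        | .u i => simp [hmem, hfmem, eq_comm]
        | .p i x =>
          simp only [hmem, bpAssign_p, hfmem, Finset.mem_union, Finset.mem_singleton,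
            Finset.mem_image, Finset.mem_univ, Finset.mem_sigma, true_and]
          constructor
          · intro h
            exact Or.inr ⟨⟨i, x⟩, ⟨h, trivial⟩, rfl⟩
          · rintro (((h | ⟨y, h⟩) | ⟨i', hi', h⟩) | ⟨⟨i', x'⟩, hi', h⟩)
            · cases h
            · cases h
            · cases h
            · cases h; exact hi'.1
        | .q j' y => simp [hmem, eq_comm]
      show V.card = 3 * B
      rw [hVeq]
      have d1 : Disjoint (({BPV.w j} : Finset (BPV t n B a)))
          (Finset.univ.image (fun y : Fin (2 * B - 1) => BPV.q j y)) := by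
        simp [Finset.disjoint_left]
      have d2 : Disjoint (({BPV.w j} : Finset (BPV t n B a))
          ∪ Finset.univ.image (fun y : Fin (2 * B - 1) => BPV.q j y))
          ((Spart j).image BPV.u) := by
        rw [Finset.disjoint_left]
        rintro x hx hx'
        simp only [Finset.mem_union, Finset.mem_singleton, Finset.mem_image,
          Finset.mem_univ, true_and] at hx hx'
        obtain ⟨i, -, rfl⟩ := hx'
        rcases hx with h | ⟨y, h⟩ <;> cases h
      have d3 : Disjoint (({BPV.w j} : Finset (BPV t n B a))
          ∪ Finset.univ.image (fun y : Fin (2 * B - 1) => BPV.q j y)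
          ∪ (Spart j).image BPV.u)
          (((Spart j).sigma (fun i => (Finset.univ : Finset (Fin (a i - 1))))).image
              (fun p => BPV.p p.1 p.2)) := by
        rw [Finset.disjoint_left]
        rintro x hx hx'
        simp only [Finset.mem_union, Finset.mem_singleton, Finset.mem_image,
          Finset.mem_univ, Finset.mem_sigma, true_and] at hx hx'
        obtain ⟨⟨i, y⟩, -, rfl⟩ := hx'
        rcases hx with (h | ⟨y', h⟩) | ⟨i', -, h⟩ <;> cases h
      rw [Finset.card_union_of_disjoint d3, Finset.card_union_of_disjoint d2,
        Finset.card_union_of_disjoint d1]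
      have c1 : (Finset.univ.image (fun y : Fin (2 * B - 1) => (BPV.q j y : BPV t n B a))).card = 2 * B - 1 := by
        rw [Finset.card_image_of_injective _ (fun y y' h => by cases h; rfl)]
        simp
      have c2 : ((Spart j).image (BPV.u : Fin n → BPV t n B a)).card = (Spart j).card :=
        Finset.card_image_of_injective _ (fun i i' h => by cases h; rfl)
      have c3 : (((Spart j).sigma (fun i => (Finset.univ : Finset (Fin (a i - 1))))).image
          (fun p => (BPV.p p.1 p.2 : BPV t n B a))).card = ∑ i ∈ Spart j, (a i - 1) := by
        rw [Finset.card_image_of_injective _ ?_, Finset.card_sigma]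
        · simp
        · rintro ⟨i, x⟩ ⟨i', x'⟩ h
          injection h with h1 h2
          exact Sigma.ext h1 h2
      rw [c1, c2, c3, Finset.card_singleton]
      have key : (Spart j).card + ∑ i ∈ Spart j, (a i - 1) = B := by
        rw [← hbal j, Finset.card_eq_sum_ones, ← Finset.sum_add_distrib]
        exact Finset.sum_congr rfl fun i _ => Nat.add_sub_cancel' (ha i)
      omega
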